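/- Let K be a non-archimedean valued field, and let P, Q ∈ K[X,Y] be homogeneous polynomials of degree d with resultant Res(P,Q) ≠ 0. Then there exist constants C₁, C₂ > 0 such that for all (x,y) ∈ K², C₁·max(|x|,|y|)^d ≤ max(|P(x,y)|, |Q(x,y)|) ≤ C₂·max(|x|,|y|)^d. Explicitly, one may take C₂ equal to the maximum of the absolute values of the coefficients of P and Q. -/

import Mathlib

/-- The Sylvester determinant (resultant) of the pair of degree-`d` binary forms
with coefficient sequences `p`, `q` (`p i` being the coefficient of
`x^i y^(d-i)`), given as the determinant of the `2d × 2d` Sylvester matrix. -/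
noncomputable def sylvesterDet {K : Type*} [Field K] (d : ℕ) (p q : ℕ → K) : K :=
  Matrix.det (Matrix.of fun i j : Fin (2 * d) =>
    if (i : ℕ) < d then
      (if (i : ℕ) ≤ (j : ℕ) ∧ (j : ℕ) ≤ (i : ℕ) + d then p ((j : ℕ) - (i : ℕ)) else 0)
    else
      (if (i : ℕ) - d ≤ (j : ℕ) ∧ (j : ℕ) ≤ (i : ℕ) then q ((j : ℕ) - ((i : ℕ) - d)) else 0))

private lemma row_sum {K : Type*} [Field K] (d a b : ℕ) (hd : 1 ≤ d) (ha : a + 1 ≤ d)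
    (hb : b = a + d) (c : ℕ → K) (x y : K) :
    (∑ j : Fin (2 * d),
        (if a ≤ (j : ℕ) ∧ (j : ℕ) ≤ b then c ((j : ℕ) - a) else 0) *
          (x ^ (j : ℕ) * y ^ (2 * d - 1 - (j : ℕ))))
      = x ^ a * y ^ (d - 1 - a) *
          ∑ k ∈ Finset.range (d + 1), c k * x ^ k * y ^ (d - k) := by
  subst hb
  rw [Fin.sum_univ_eq_sum_range
    (fun j => (if a ≤ j ∧ j ≤ a + d then c (j - a) else 0) *
      (x ^ j * y ^ (2 * d - 1 - j))) (2 * d)]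
  have h1 : ∀ j : ℕ, (if a ≤ j ∧ j ≤ a + d then c (j - a) else 0) *
      (x ^ j * y ^ (2 * d - 1 - j))
      = if a ≤ j ∧ j ≤ a + d then c (j - a) * (x ^ j * y ^ (2 * d - 1 - j)) else 0 := by
    intro j; split <;> simp
  simp_rw [h1]
  rw [← Finset.sum_filter]
  have h2 : (Finset.range (2 * d)).filter (fun j => a ≤ j ∧ j ≤ a + d)
      = Finset.Ico a (a + d + 1) := by
    ext j
    simp only [Finset.mem_filter, Finset.mem_range, Finset.mem_Ico]
    omega
  rw [h2, Finset.sum_Ico_eq_sum_range]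
  have h3 : a + d + 1 - a = d + 1 := by omega
  rw [h3, Finset.mul_sum]
  refine Finset.sum_congr rfl fun k hk => ?_
  have hkd : k ≤ d := by simpa [Nat.lt_succ_iff] using hk
  have e1 : a + k - a = k := by omega
  have e2 : x ^ (a + k) = x ^ a * x ^ k := pow_add x a k
  have e3 : y ^ (2 * d - 1 - (a + k)) = y ^ (d - 1 - a) * y ^ (d - k) := by
    rw [← pow_add]
    congr 1
    omega
  rw [e1, e2, e3]
  ring

/-- if `P, Q` are homogeneous binary forms of degree `d` with
nonzero resultant, there are `C₁, C₂ > 0` with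
`C₁ ‖(x,y)‖^d ≤ max(‖P(x,y)‖, ‖Q(x,y)‖) ≤ C₂ ‖(x,y)‖^d`, where
`‖(x,y)‖ = max(‖x‖,‖y‖)`, and one may take `C₂` to be the maximum of the
absolute values of the coefficients of `P` and `Q`. -/
theorem stmt8 {K : Type*} [NormedField K] [IsUltrametricDist K]
    (d : ℕ) (hd : 1 ≤ d) (p q : ℕ → K) (hres : sylvesterDet d p q ≠ 0)
    (P Q : K → K → K)
    (hP : ∀ x y, P x y = ∑ i ∈ Finset.range (d + 1), p i * x ^ i * y ^ (d - i))
    (hQ : ∀ x y, Q x y = ∑ i ∈ Finset.range (d + 1), q i * x ^ i * y ^ (d - i)) :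
    ∃ C₁ > (0 : ℝ), ∀ x y : K,
      C₁ * max ‖x‖ ‖y‖ ^ d ≤ max ‖P x y‖ ‖Q x y‖ ∧
      max ‖P x y‖ ‖Q x y‖ ≤
        ((Finset.range (d + 1)).sup' Finset.nonempty_range_add_one
          fun i => max ‖p i‖ ‖q i‖) * max ‖x‖ ‖y‖ ^ d := by
  classical
  haveI : NeZero (2 * d) := ⟨by omega⟩
  set M : Matrix (Fin (2 * d)) (Fin (2 * d)) K := Matrix.of fun i j : Fin (2 * d) =>
    if (i : ℕ) < d then
      (if (i : ℕ) ≤ (j : ℕ) ∧ (j : ℕ) ≤ (i : ℕ) + d then p ((j : ℕ) - (i : ℕ)) else 0)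
    else
      (if (i : ℕ) - d ≤ (j : ℕ) ∧ (j : ℕ) ≤ (i : ℕ) then q ((j : ℕ) - ((i : ℕ) - d)) else 0)
    with hM
  have hdet : IsUnit M.det := isUnit_iff_ne_zero.mpr hres
  set N := M⁻¹ with hN
  have hNM : N * M = 1 := Matrix.nonsing_inv_mul M hdet
  have hne : (Finset.univ : Finset (Fin (2 * d) × Fin (2 * d))).Nonempty := Finset.univ_nonempty
  set B : ℝ := Finset.univ.sup' hne (fun ij : Fin (2 * d) × Fin (2 * d) => ‖N ij.1 ij.2‖)
    with hB
  have hBle : ∀ i j, ‖N i j‖ ≤ B := fun i j =>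
    Finset.le_sup' (f := fun ij : Fin (2 * d) × Fin (2 * d) => ‖N ij.1 ij.2‖)
      (Finset.mem_univ (i, j))
  have hBpos : 0 < B := by
    by_contra h
    push_neg at h
    have hN0 : N = 0 := by
      ext i j
      have h1 := (hBle i j).trans h
      have h2 := norm_nonneg (N i j)
      have : ‖N i j‖ = 0 := le_antisymm h1 h2
      simpa using this
    rw [hN0, zero_mul] at hNM
    have h0 : (0 : Matrix (Fin (2 * d)) (Fin (2 * d)) K) ⟨0, by omega⟩ ⟨0, by omega⟩
        = (1 : Matrix (Fin (2 * d)) (Fin (2 * d)) K) ⟨0, by omega⟩ ⟨0, by omega⟩ := by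
      rw [hNM]
    simp [Matrix.one_apply] at h0
  refine ⟨B⁻¹, by positivity, fun x y => ?_⟩
  set m := max ‖x‖ ‖y‖ with hm
  have hxm : ‖x‖ ≤ m := le_max_left _ _
  have hym : ‖y‖ ≤ m := le_max_right _ _
  have hm0 : 0 ≤ m := (norm_nonneg x).trans hxm
  set C₂ := (Finset.range (d + 1)).sup' Finset.nonempty_range_add_one
    (fun i => max ‖p i‖ ‖q i‖) with hC2
  have hC20 : ∀ i ∈ Finset.range (d + 1), ‖p i‖ ≤ C₂ ∧ ‖q i‖ ≤ C₂ := by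
    intro i hi
    constructor
    · exact (le_max_left _ _).trans
        (Finset.le_sup' (fun i => max ‖p i‖ ‖q i‖) hi)
    · exact (le_max_right _ _).trans
        (Finset.le_sup' (fun i => max ‖p i‖ ‖q i‖) hi)
  have hC2nn : 0 ≤ C₂ :=
    (norm_nonneg (p 0)).trans ((hC20 0 (Finset.mem_range.mpr (by omega))).1)
  -- upper bound
  have hup : ∀ c : ℕ → K, (∀ i ∈ Finset.range (d + 1), ‖c i‖ ≤ C₂) →
      ‖∑ i ∈ Finset.range (d + 1), c i * x ^ i * y ^ (d - i)‖ ≤ C₂ * m ^ d := by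
    intro c hc
    apply IsUltrametricDist.norm_sum_le_of_forall_le_of_nonempty Finset.nonempty_range_add_one
    intro i hi
    have hid : i ≤ d := by simpa [Nat.lt_succ_iff] using hi
    rw [norm_mul, norm_mul, norm_pow, norm_pow]
    calc ‖c i‖ * ‖x‖ ^ i * ‖y‖ ^ (d - i) ≤ C₂ * m ^ i * m ^ (d - i) := by
          apply mul_le_mul
          · exact mul_le_mul (hc i hi) (pow_le_pow_left₀ (norm_nonneg x) hxm i)
              (by positivity) hC2nn
          · exact pow_le_pow_left₀ (norm_nonneg y) hym _
          · positivity
          · positivity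
      _ = C₂ * m ^ d := by
          rw [mul_assoc, ← pow_add]
          congr 2
          omega
  have hupper : max ‖P x y‖ ‖Q x y‖ ≤ C₂ * m ^ d := by
    apply max_le
    · rw [hP]; exact hup p (fun i hi => (hC20 i hi).1)
    · rw [hQ]; exact hup q (fun i hi => (hC20 i hi).2)
  refine ⟨?_, hupper⟩
  -- lower bound
  set W := max ‖P x y‖ ‖Q x y‖ with hW
  have hWnn : 0 ≤ W := (norm_nonneg _).trans (le_max_left _ _)
  rcases eq_or_lt_of_le hm0 with hmz | hmpos
  · -- m = 0
    rw [← hmz, zero_pow (by omega : d ≠ 0), mul_zero]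
    exact hWnn
  -- m > 0
  set v : Fin (2 * d) → K := fun j => x ^ (j : ℕ) * y ^ (2 * d - 1 - (j : ℕ)) with hv
  have hMv : ∀ i : Fin (2 * d), M.mulVec v i =
      if (i : ℕ) < d then x ^ (i : ℕ) * y ^ (d - 1 - (i : ℕ)) * P x y
      else x ^ ((i : ℕ) - d) * y ^ (d - 1 - ((i : ℕ) - d)) * Q x y := by
    intro i
    simp only [Matrix.mulVec, dotProduct, hM, Matrix.of_apply, hv]
    by_cases hi : (i : ℕ) < d
    · simp only [hi, if_true]
      rw [hP]
      exact row_sum d (i : ℕ) ((i : ℕ) + d) hd (by omega) rfl p x y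
    · simp only [hi, if_false]
      rw [hQ]
      exact row_sum d ((i : ℕ) - d) (i : ℕ) hd (by omega) (by omega) q x y
  have hvN : ∀ j : Fin (2 * d), v j = ∑ i : Fin (2 * d), N j i * M.mulVec v i := by
    intro j
    have h1 : N.mulVec (M.mulVec v) = v := by
      rw [Matrix.mulVec_mulVec, hNM, Matrix.one_mulVec]
    conv_lhs => rw [← h1]
    simp [Matrix.mulVec, dotProduct]
  have hwb : ∀ i : Fin (2 * d), ‖M.mulVec v i‖ ≤ m ^ (d - 1) * W := by
    have key : ∀ a : ℕ, a ≤ d - 1 → ∀ R : K, ‖R‖ ≤ W →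
        ‖x ^ a * y ^ (d - 1 - a) * R‖ ≤ m ^ (d - 1) * W := by
      intro a ha R hR
      rw [norm_mul, norm_mul, norm_pow, norm_pow]
      calc ‖x‖ ^ a * ‖y‖ ^ (d - 1 - a) * ‖R‖ ≤ m ^ a * m ^ (d - 1 - a) * W := by
            apply mul_le_mul
            · exact mul_le_mul (pow_le_pow_left₀ (norm_nonneg x) hxm a)
                (pow_le_pow_left₀ (norm_nonneg y) hym _) (by positivity) (by positivity)
            · exact hR
            · exact norm_nonneg R
            · positivity
        _ = m ^ (d - 1) * W := by
            rw [← pow_add]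
            congr 2
            omega
    intro i
    rw [hMv i]
    by_cases hi : (i : ℕ) < d
    · simp only [hi, if_true]
      exact key (i : ℕ) (by omega) _ (le_max_left _ _)
    · simp only [hi, if_false]
      exact key ((i : ℕ) - d) (by omega) _ (le_max_right _ _)
  have hmain : m ^ (2 * d - 1) ≤ B * (m ^ (d - 1) * W) := by
    have hj : ∃ j : Fin (2 * d), ‖v j‖ = m ^ (2 * d - 1) := by
      rcases le_total ‖y‖ ‖x‖ with hxy | hxy
      · refine ⟨⟨2 * d - 1, by omega⟩, ?_⟩
        have : (2 : ℕ) * d - 1 - (2 * d - 1) = 0 := by omega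
        simp only [hv, this, pow_zero, mul_one, norm_pow]
        rw [show m = ‖x‖ from max_eq_left hxy]
      · refine ⟨⟨0, by omega⟩, ?_⟩
        simp only [hv, pow_zero, one_mul, norm_pow]
        rw [show m = ‖y‖ from max_eq_right hxy, Nat.sub_zero]
    obtain ⟨j0, hj0⟩ := hj
    calc m ^ (2 * d - 1) = ‖v j0‖ := hj0.symm
      _ = ‖∑ i : Fin (2 * d), N j0 i * M.mulVec v i‖ := by rw [← hvN]
      _ ≤ B * (m ^ (d - 1) * W) := by
          apply IsUltrametricDist.norm_sum_le_of_forall_le_of_nonempty Finset.univ_nonempty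
          intro i _
          rw [norm_mul]
          exact mul_le_mul (hBle j0 i) (hwb i) (norm_nonneg _)
            (le_of_lt hBpos)
  have hcancel : m ^ d ≤ B * W := by
    have h1 : m ^ (2 * d - 1) = m ^ d * m ^ (d - 1) := by
      rw [← pow_add]; congr 1; omega
    rw [h1] at hmain
    have h2 : B * (m ^ (d - 1) * W) = (B * W) * m ^ (d - 1) := by ring
    rw [h2] at hmain
    exact le_of_mul_le_mul_right hmain (pow_pos hmpos (d - 1))
  rw [inv_mul_le_iff₀ hBpos]
  exact hcancel
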